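/- There exists a subfield K ⊆ ℝ of cardinality 𝔠 such that the set of squares D = {y² | y ∈ K} ⊆ K is not a member of the Borel σ-algebra 𝓑(τ_K) generated by the order topology τ_K on K, where K carries the linear order inherited from ℝ. (D is defined in K by the ring-language formula ∃y x = y² without parameters.) -/

import Mathlib

open Cardinal

open Set Polynomial IntermediateField

noncomputable section

namespace NonBorelSquares

/-! ### Algebra lemmas -/

theorem sq_ne_of_transcendental {F E : Type*} [Field F] [Field E] [Algebra F E]
    {u : E} (hu : Transcendental F u) {g : E} (hg : g ∈ F⟮u⟯) : g ^ 2 ≠ u := by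
  obtain ⟨p, q, rfl⟩ := (IntermediateField.mem_adjoin_simple_iff F _).1 hg
  intro h
  by_cases hq : (aeval u) q = 0
  · rw [hq, div_zero, zero_pow (by norm_num)] at h
    exact hu (h ▸ isAlgebraic_zero)
  · have hq0 : q ≠ 0 := fun h0 => hq (by simp [h0])
    have key : aeval u (p ^ 2) = aeval u (X * q ^ 2) := by
      rw [div_pow, div_eq_iff (pow_ne_zero 2 hq)] at h
      simp only [map_mul, map_pow, aeval_X]
      exact h
    have hpq : p ^ 2 = X * q ^ 2 := (transcendental_iff_injective.mp hu) key
    have hp0 : p ≠ 0 := by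
      intro h0
      rw [h0, zero_pow two_ne_zero] at hpq
      rcases mul_eq_zero.mp hpq.symm with h1 | h1
      · exact X_ne_zero h1
      · exact pow_ne_zero 2 hq0 h1
    have := congrArg natDegree hpq
    rw [natDegree_pow, natDegree_mul X_ne_zero (pow_ne_zero 2 hq0), natDegree_X,
      natDegree_pow] at this
    omega

theorem exists_sq_of_sq_mem {F E : Type*} [Field F] [Field E] [Algebra F E]
    {u : E} (hu : Transcendental F u) {g : E}
    (hg : g ∈ F⟮u⟯) {c : F} (h : g ^ 2 = algebraMap F E c) : ∃ d : F, d ^ 2 = c := by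
  obtain ⟨p, q, rfl⟩ := (IntermediateField.mem_adjoin_simple_iff F _).1 hg
  by_cases hq : (aeval u) q = 0
  · rw [hq, div_zero, zero_pow (by norm_num)] at h
    exact ⟨0, by have hc : c = 0 := (algebraMap F E).injective (by simpa using h.symm); simp [hc]⟩
  · have hq0 : q ≠ 0 := fun h0 => hq (by simp [h0])
    have key : aeval u (p ^ 2) = aeval u (C c * q ^ 2) := by
      rw [div_pow, div_eq_iff (pow_ne_zero 2 hq)] at h
      simp only [map_mul, map_pow, aeval_C]
      rw [h]
    have hpq : p ^ 2 = C c * q ^ 2 := (transcendental_iff_injective.mp hu) key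
    by_cases hp0 : p = 0
    · rw [hp0, zero_pow two_ne_zero] at hpq
      rcases mul_eq_zero.mp hpq.symm with h1 | h1
      · exact ⟨0, by simp [C_eq_zero.mp h1]⟩
      · exact absurd (pow_eq_zero_iff two_ne_zero |>.mp h1) hq0
    · refine ⟨p.leadingCoeff / q.leadingCoeff, ?_⟩
      have := congrArg leadingCoeff hpq
      rw [leadingCoeff_pow, leadingCoeff_mul, leadingCoeff_pow, leadingCoeff_C] at this
      have hql : q.leadingCoeff ≠ 0 := leadingCoeff_ne_zero.mpr hq0
      rw [div_pow, this, mul_div_cancel_right₀ _ (pow_ne_zero 2 hql)]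

/-- The field generated by a set. -/
def EF (s : Set ℝ) : IntermediateField ℚ ℝ := IntermediateField.adjoin ℚ s

/-- The set of reals algebraic over the field generated by `s`. -/
def ASet (s : Set ℝ) : Set ℝ := {x : ℝ | IsAlgebraic (EF s) x}

theorem mem_ASet_of_mem_EF {s : Set ℝ} {x : ℝ} (hx : x ∈ EF s) : x ∈ ASet s := by
  have := isAlgebraic_algebraMap (R := (EF s)) (A := ℝ) ⟨x, hx⟩
  simpa [ASet] using this

theorem EF_mono {s T : Set ℝ} (h : s ⊆ T) : EF s ≤ EF T := IntermediateField.adjoin.mono _ _ _ h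

theorem subset_EF (s : Set ℝ) : s ⊆ (EF s : Set ℝ) := IntermediateField.subset_adjoin _ _

theorem mk_EF_lt {s : Set ℝ} (hs : #s < 𝔠) : #(EF s) < 𝔠 := by
  refine lt_of_le_of_lt (IntermediateField.cardinalMk_adjoin_le ℚ s) ?_
  rw [Cardinal.mkRat]
  exact max_lt (max_lt aleph0_lt_continuum hs) aleph0_lt_continuum

theorem mk_ASet_lt {s : Set ℝ} (hs : #s < 𝔠) : #(ASet s) < 𝔠 := by
  have hF : #(EF s) < 𝔠 := mk_EF_lt hs
  have hsub : ASet s ⊆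
      ⋃ p : {p : Polynomial (EF s) // p ≠ 0}, {x : ℝ | aeval x (p : Polynomial (EF s)) = 0} := by
    rintro x ⟨p, hp, hpx⟩
    exact mem_iUnion.2 ⟨⟨p, hp⟩, hpx⟩
  refine lt_of_le_of_lt (mk_le_mk_of_subset hsub) ?_
  refine lt_of_le_of_lt (mk_iUnion_le_sum_mk.trans
    ((Cardinal.sum_le_sum _ (fun _ => ℵ₀) ?_).trans_eq (Cardinal.sum_const' _ _))) ?_
  · rintro ⟨p, hp⟩
    have hmap : p.map (algebraMap (EF s) ℝ) ≠ 0 :=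
      (Polynomial.map_ne_zero_iff (algebraMap (EF s) ℝ).injective).mpr hp
    have hfin : {x : ℝ | aeval x p = 0}.Finite := by
      have h2 := Polynomial.finite_setOf_isRoot hmap
      have : {x : ℝ | aeval x p = 0} = {x : ℝ | (p.map (algebraMap (EF s) ℝ)).IsRoot x} := by
        ext x
        simp [Polynomial.IsRoot, Polynomial.eval_map, Polynomial.aeval_def]
      rwa [this]
    exact hfin.lt_aleph0.le
  · have h1 : #{p : Polynomial (EF s) // p ≠ 0} < 𝔠 :=
      lt_of_le_of_lt (mk_subtype_le _)
        (lt_of_le_of_lt Polynomial.cardinalMk_le_max (max_lt hF aleph0_lt_continuum))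
    exact Cardinal.mul_lt_of_lt aleph0_le_continuum h1 aleph0_lt_continuum

/-! ### The index type and enumeration of Borel sets -/

abbrev Idx : Type := (Cardinal.continuum.ord).ToType

instance : Nonempty Idx := by
  rw [Ordinal.toType_nonempty_iff_ne_zero]
  simp only [ne_eq, Cardinal.ord_eq_zero]
  exact continuum_ne_zero

instance : NoMaxOrder Idx := Cardinal.noMaxOrder aleph0_le_continuum

theorem mk_Idx : #Idx = 𝔠 := by rw [Cardinal.mk_toType, Cardinal.card_ord]

theorem mk_Iio_Idx (i : Idx) : #(Iio i) < 𝔠 := Cardinal.mk_Iio_ord_toType i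

/-- The collection of Borel subsets of `ℝ`. -/
def Bor : Set (Set ℝ) := {B : Set ℝ | MeasurableSet B}

theorem mk_Bor : #Bor = 𝔠 := by
  apply le_antisymm
  · have hms : Real.measurableSpace =
        MeasurableSpace.generateFrom (Set.range (Iio : ℝ → Set ℝ)) := by
      rw [show Real.measurableSpace = borel ℝ from rfl, borel_eq_generateFrom_Iio]
    have h0 : Bor = {B : Set ℝ | @MeasurableSet ℝ Real.measurableSpace B} := rfl
    rw [h0, hms]
    exact MeasurableSpace.cardinal_measurableSet_le_continuum
      (mk_range_le.trans (le_of_eq Cardinal.mk_real))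
  · rw [← Cardinal.mk_real]
    refine Cardinal.mk_le_of_injective (f := fun a : ℝ => (⟨Iio a, by simp only [Bor, mem_setOf_eq]; exact measurableSet_Iio⟩ : Bor)) ?_
    intro a b hab
    exact Iio_injective (congrArg Subtype.val hab)

/-- An enumeration of the Borel sets of `ℝ` by `Idx`. -/
def enumB : ↥Bor ≃ Idx :=
  Classical.choice (Cardinal.eq.mp (by rw [mk_Bor, mk_Idx]))

def Bof (i : Idx) : Set ℝ := (enumB.symm i : Set ℝ)

/-! ### The witness sets -/

open Classical in
/-- The set from which we choose the diagonalizing transcendental at a stage dealing with `B`. -/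
def W (B : Set ℝ) : Set ℝ :=
  if 𝔠 ≤ #(B ∩ Iio 0 : Set ℝ) then B ∩ Iio 0
  else if 𝔠 ≤ #{x : ℝ | x ∈ Ioi 0 ∧ x ^ 2 ∉ B} then {x : ℝ | x ∈ Ioi 0 ∧ x ^ 2 ∉ B}
  else B ∩ Ioi 0

theorem continuum_le_mk_W (B : Set ℝ) : 𝔠 ≤ #(W B) := by
  rw [W]
  split_ifs with h1 h2
  · exact h1
  · exact h2
  · push_neg at h1 h2
    have hsplit : (Ioi (0:ℝ)) ⊆ {x : ℝ | x ∈ Ioi 0 ∧ x ^ 2 ∈ B} ∪ {x : ℝ | x ∈ Ioi 0 ∧ x ^ 2 ∉ B} := by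
      intro x hx
      by_cases hxB : x ^ 2 ∈ B
      · exact Or.inl ⟨hx, hxB⟩
      · exact Or.inr ⟨hx, hxB⟩
    have h3 : 𝔠 ≤ #({x : ℝ | x ∈ Ioi 0 ∧ x ^ 2 ∈ B} ∪ {x : ℝ | x ∈ Ioi 0 ∧ x ^ 2 ∉ B} : Set ℝ) :=
      (Cardinal.mk_Ioi_real 0).symm.trans_le (mk_le_mk_of_subset hsplit)
    have h4 : 𝔠 ≤ #{x : ℝ | x ∈ Ioi 0 ∧ x ^ 2 ∈ B} := by
      by_contra h4
      push_neg at h4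
      exact absurd h3 (not_le.2 ((mk_union_le _ _).trans_lt
        (Cardinal.add_lt_of_lt aleph0_le_continuum h4 h2)))
    refine h4.trans ?_
    refine Cardinal.mk_le_of_injective
      (f := fun x : {x : ℝ | x ∈ Ioi 0 ∧ x ^ 2 ∈ B} =>
        (⟨(x : ℝ) ^ 2, x.2.2, mem_Ioi.mpr (pow_pos x.2.1 2)⟩ : (B ∩ Ioi 0 : Set ℝ))) ?_
    rintro ⟨x, hx⟩ ⟨y, hy⟩ hxy
    have hsq : x ^ 2 = y ^ 2 := congrArg Subtype.val hxy
    exact Subtype.ext ((sq_eq_sq₀ hx.1.le hy.1.le).mp hsq)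

/-! ### The transfinite construction -/

open Classical in
def pick (Ws A : Set ℝ) : ℝ := if h : (Ws \ A).Nonempty then h.some else 0

theorem pick_mem {Ws A : Set ℝ} (h : (Ws \ A).Nonempty) : pick Ws A ∈ Ws \ A := by
  rw [pick, dif_pos h]
  exact h.some_mem

/-- The transfinite sequence of mutually transcendental reals. -/
def t : Idx → ℝ :=
  (IsWellFounded.wf (r := ((· < ·) : Idx → Idx → Prop))).fix
    (fun i prev => pick (W (Bof i)) (ASet (Set.range (fun j : Iio i => prev j j.2))))

theorem t_eq (i : Idx) : t i = pick (W (Bof i)) (ASet (t '' Iio i)) := by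
  have h := (IsWellFounded.wf (r := ((· < ·) : Idx → Idx → Prop))).fix_eq
    (fun i prev => pick (W (Bof i)) (ASet (Set.range (fun j : Iio i => prev j j.2)))) i
  rw [t] at *
  rw [h]
  congr 1
  rw [Set.image_eq_range]

theorem t_mem (i : Idx) : t i ∈ W (Bof i) \ ASet (t '' Iio i) := by
  rw [t_eq i]
  apply pick_mem
  rcases Set.not_subset.mp (fun hsub : W (Bof i) ⊆ ASet (t '' Iio i) =>
    absurd ((continuum_le_mk_W (Bof i)).trans (mk_le_mk_of_subset hsub))
      (not_le.2 (mk_ASet_lt ((mk_image_le).trans_lt (mk_Iio_Idx i))))) with ⟨x, hx1, hx2⟩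
  exact ⟨x, hx1, hx2⟩

theorem t_not_algebraic (i : Idx) : t i ∉ ASet (t '' Iio i) := (t_mem i).2

theorem t_injective : Function.Injective t := by
  intro i j hij
  by_contra hne
  rcases lt_or_gt_of_ne hne with h | h
  · exact t_not_algebraic j (hij ▸ mem_ASet_of_mem_EF (subset_EF _ ⟨i, h, rfl⟩))
  · exact t_not_algebraic i (hij ▸ mem_ASet_of_mem_EF (subset_EF _ ⟨j, h, rfl⟩))



/-! ### The non-square property -/

theorem EF_directed {j : Idx} :
    Directed (· ≤ ·) (fun j' : Iio j => EF (t '' Iio j'.1)) := by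
  rintro ⟨a, ha⟩ ⟨b, hb⟩
  exact ⟨⟨max a b, mem_Iio.mpr (max_lt ha hb)⟩,
    EF_mono (image_mono (Iio_subset_Iio (le_max_left a b))),
    EF_mono (image_mono (Iio_subset_Iio (le_max_right a b)))⟩

theorem EF_eq_iUnion_of_not_greatest {j : Idx} (hne : (Iio j).Nonempty)
    (hng : ¬ ∃ m, IsGreatest (Iio j) m) :
    (EF (t '' Iio j) : Set ℝ) = ⋃ j' : Iio j, (EF (t '' Iio j'.1) : Set ℝ) := by
  have hNE : Nonempty (Iio j) := hne.to_subtype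
  have hEF : EF (t '' Iio j) = ⨆ j' : Iio j, EF (t '' Iio j'.1) := by
    apply le_antisymm
    swap
    · exact iSup_le fun j' => EF_mono (image_mono (Iio_subset_Iio j'.2.le))
    rw [EF, adjoin_le_iff]
    rintro x ⟨k, hk, rfl⟩
    obtain ⟨j', hkj', hj'⟩ : ∃ j', k < j' ∧ j' < j := by
      by_contra hcon
      push_neg at hcon
      exact hng ⟨k, hk, fun y hy => le_of_not_gt fun hlt => absurd hy (not_lt.mpr (hcon y hlt))⟩
    have hmem : t k ∈ EF (t '' Iio j') := subset_EF _ ⟨k, hkj', rfl⟩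
    exact SetLike.le_def.mp (le_iSup (fun j' : Iio j => EF (t '' Iio j'.1)) ⟨j', hj'⟩) hmem
  rw [hEF, IntermediateField.coe_iSup_of_directed EF_directed]

theorem EF_range_eq_iUnion :
    (EF (Set.range t) : Set ℝ) = ⋃ j : Idx, (EF (t '' Iio j) : Set ℝ) := by
  have hdir : Directed (· ≤ ·) (fun j : Idx => EF (t '' Iio j)) := by
    intro a b
    exact ⟨max a b,
      EF_mono (image_mono (Iio_subset_Iio (le_max_left a b))),
      EF_mono (image_mono (Iio_subset_Iio (le_max_right a b)))⟩
  have hEF : EF (Set.range t) = ⨆ j : Idx, EF (t '' Iio j) := by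
    apply le_antisymm
    swap
    · exact iSup_le fun j => EF_mono (image_subset_range _ _)
    rw [EF, adjoin_le_iff]
    rintro x ⟨k, rfl⟩
    obtain ⟨j, hj⟩ := exists_gt k
    have hmem : t k ∈ EF (t '' Iio j) := subset_EF _ ⟨k, hj, rfl⟩
    exact SetLike.le_def.mp (le_iSup (fun j : Idx => EF (t '' Iio j)) j) hmem
  rw [hEF, IntermediateField.coe_iSup_of_directed hdir]

theorem not_sq : ∀ j : Idx, ∀ i : Idx, ∀ g : ℝ, g ∈ EF (t '' Iio j) → g ^ 2 ≠ t i := by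
  intro j
  refine (IsWellFounded.wf (r := ((· < ·) : Idx → Idx → Prop))).induction
    (C := fun j => ∀ i g, g ∈ EF (t '' Iio j) → g ^ 2 ≠ t i) j ?_
  clear j
  intro j IH i g hg hsq
  by_cases hji : j ≤ i
  · have h1 : g ∈ EF (t '' Iio i) := EF_mono (image_mono (Iio_subset_Iio hji)) hg
    have h2 : t i ∈ EF (t '' Iio i) := hsq ▸ pow_mem h1 2
    exact t_not_algebraic i (mem_ASet_of_mem_EF h2)
  push_neg at hji
  by_cases hgr : ∃ m, IsGreatest (Iio j) m
  · obtain ⟨m, hm⟩ := hgr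
    have hIio : Iio j = insert m (Iio m) := by
      ext k
      simp only [mem_Iio, mem_insert_iff]
      constructor
      · intro hk
        rcases eq_or_lt_of_le (hm.2 hk) with h | h
        · exact Or.inl h
        · exact Or.inr h
      · rintro (rfl | hk)
        · exact hm.1
        · exact hk.trans hm.1
    have himg : t '' Iio j = t '' Iio m ∪ {t m} := by
      rw [hIio, image_insert_eq, Set.union_singleton]
    have htr : Transcendental (EF (t '' Iio m)) (t m) := fun h => t_not_algebraic m h
    have hres := IntermediateField.adjoin_adjoin_left ℚ (t '' Iio m) {t m}
    have hmem : g ∈ (EF (t '' Iio m))⟮t m⟯ := by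
      rw [EF, himg, ← hres] at hg
      exact hg
    have him : i ≤ m := hm.2 hji
    rcases eq_or_lt_of_le him with rfl | hilt
    · exact sq_ne_of_transcendental htr hmem hsq
    · have htiEm : t i ∈ EF (t '' Iio m) := subset_EF _ ⟨i, hilt, rfl⟩
      obtain ⟨d, hd⟩ := exists_sq_of_sq_mem htr hmem (c := ⟨t i, htiEm⟩)
        (by rw [hsq]; rfl)
      have hd2 : ((d : ℝ)) ^ 2 = t i := by
        have h3 := congrArg (Subtype.val : (EF (t '' Iio m)) → ℝ) hd
        push_cast at h3
        exact h3
      exact IH m hm.1 i (d : ℝ) d.2 hd2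
  · have hne : (Iio j).Nonempty := ⟨i, hji⟩
    have hcoe := EF_eq_iUnion_of_not_greatest hne hgr
    have hmem : g ∈ ⋃ j' : Iio j, (EF (t '' Iio j'.1) : Set ℝ) := hcoe ▸ hg
    obtain ⟨j', hj'⟩ := mem_iUnion.mp hmem
    exact IH j'.1 j'.2 i g hj' hsq


/-! ### Topology of a subfield of `ℝ` -/

theorem preorderTopology_eq (K : Subfield ℝ) :
    Preorder.topology K = TopologicalSpace.induced (Subtype.val : K → ℝ) inferInstance := by
  have h : @OrderTopology K (TopologicalSpace.induced (Subtype.val : K → ℝ) inferInstance) _ := by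
    refine induced_orderTopology (Subtype.val : K → ℝ) (fun {x y} => ?_) (fun {x y} hxy => ?_)
    · exact Iff.rfl
    · obtain ⟨q, hq1, hq2⟩ := exists_rat_btwn hxy
      exact ⟨⟨(q : ℝ), SubfieldClass.ratCast_mem K q⟩, hq1, hq2⟩
  exact h.topology_eq_generate_intervals.symm

theorem borel_induced_eq (K : Subfield ℝ) :
    @borel K (TopologicalSpace.induced (Subtype.val : K → ℝ) inferInstance)
      = MeasurableSpace.comap (Subtype.val : K → ℝ) (borel ℝ) := by
  rw [borel, borel, MeasurableSpace.comap_generateFrom]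
  congr 1

end NonBorelSquares

section

open NonBorelSquares

/-- There is a subfield `K ⊆ ℝ` of cardinality `𝔠` such that the set `D = {y² | y ∈ K}` of
squares of `K` is not a member of the Borel σ-algebra generated by the order topology on `K`,
where `K` carries the linear order inherited from `ℝ`. -/
theorem exists_subfield_with_nonBorel_squares_order_topology :
    ∃ K : Subfield ℝ, #K = Cardinal.continuum ∧
      ¬ @MeasurableSet K (@borel K (Preorder.topology K)) {d : K | ∃ y : K, d = y ^ 2} := by
  classical
  set KF : IntermediateField ℚ ℝ := EF (Set.range t) with hKF
  refine ⟨KF.toSubfield, ?_, ?_⟩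
  · apply le_antisymm
    · exact (Cardinal.mk_le_of_injective (Subtype.val_injective)).trans_eq Cardinal.mk_real
    · have h1 : 𝔠 = #(Set.range t) := by
        rw [Cardinal.mk_range_eq t t_injective, mk_Idx]
      have h2 : #(Set.range t) ≤ #KF := mk_le_mk_of_subset (subset_EF _)
      exact h1.le.trans h2
  · intro hD
    rw [preorderTopology_eq, borel_induced_eq] at hD
    obtain ⟨B, hB, hpre⟩ := MeasurableSpace.measurableSet_comap.mp hD
    have hBmeas : MeasurableSet B := hB
    set i : Idx := enumB ⟨B, hBmeas⟩ with hi
    have hBof : Bof i = B := by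
      rw [Bof, hi, Equiv.symm_apply_apply]
    have htiK : t i ∈ KF.toSubfield := by
      rw [IntermediateField.mem_toSubfield]
      exact subset_EF _ (Set.mem_range_self i)
    have hti := t_mem i
    rw [hBof] at hti
    have htiW : t i ∈ W B := hti.1
    rw [W] at htiW
    split_ifs at htiW with h1 h2
    · -- t i ∈ B ∩ Iio 0 : a negative element of K lying in B, but squares are nonnegative
      have hmemD : (⟨t i, htiK⟩ : KF.toSubfield) ∈ {d : KF.toSubfield | ∃ y, d = y ^ 2} := by
        rw [← hpre]
        exact htiW.1
      obtain ⟨y, hy⟩ := hmemD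
      have hval : t i = (y : ℝ) ^ 2 := by
        have := congrArg (Subtype.val : KF.toSubfield → ℝ) hy
        push_cast at this
        exact this
      have : (0 : ℝ) ≤ t i := hval ▸ sq_nonneg (y : ℝ)
      exact absurd htiW.2 (not_lt.mpr this)
    · -- t i > 0 with (t i)^2 ∉ B : but (t i)^2 is a square of K
      have hsqK : t i ^ 2 ∈ KF.toSubfield := pow_mem htiK 2
      have hmemD : (⟨t i ^ 2, hsqK⟩ : KF.toSubfield) ∈ {d : KF.toSubfield | ∃ y, d = y ^ 2} := by
        exact ⟨⟨t i, htiK⟩, by ext; push_cast; ring⟩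
      rw [← hpre] at hmemD
      exact htiW.2 hmemD
    · -- t i ∈ B ∩ Ioi 0 : an element of B that is not a square in K
      have hmemD : (⟨t i, htiK⟩ : KF.toSubfield) ∈ {d : KF.toSubfield | ∃ y, d = y ^ 2} := by
        rw [← hpre]
        exact htiW.1
      obtain ⟨y, hy⟩ := hmemD
      have hval : (y : ℝ) ^ 2 = t i := by
        have := congrArg (Subtype.val : KF.toSubfield → ℝ) hy
        push_cast at this
        exact this.symm
      have hyK : (y : ℝ) ∈ EF (Set.range t) := by
        have := y.2
        rwa [IntermediateField.mem_toSubfield] at this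
      have : (y : ℝ) ∈ ⋃ j : Idx, (EF (t '' Iio j) : Set ℝ) := EF_range_eq_iUnion ▸ hyK
      obtain ⟨j, hj⟩ := Set.mem_iUnion.mp this
      exact not_sq j i (y : ℝ) hj hval

end
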